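/- Suppose x, y ∈ V, f, g ∈ K[X] satisfy f(T)(x) = 0 and g(T)(y) = 0, and that the reversed conjugate polynomial reverse(f^σ) is coprime to g in K[X]. Then η(x, y) = 0. -/

import Mathlib

open Polynomial

theorem aux_commute_aeval {R A : Type*} [CommSemiring R] [Semiring A] [Algebra R A]
    {a b : A} (h : Commute a b) (p q : Polynomial R) :
    Commute (Polynomial.aeval a p) (Polynomial.aeval b q) := by
  have key : ∀ (c d : A), Commute c d → ∀ r : Polynomial R,
      Commute c (Polynomial.aeval d r) := by
    intro c d hcd r
    induction r using Polynomial.induction_on with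
    | C s => simpa [Commute, SemiconjBy] using (Algebra.commutes s c).symm
    | add p q hp hq => simpa [map_add] using hp.add_right hq
    | monomial n s hp =>
      rw [pow_succ, ← mul_assoc, map_mul, Polynomial.aeval_X]
      exact hp.mul_right hcd
  exact key (Polynomial.aeval a p) b (key b a h.symm p).symm q

/-- Let `K` be a field with involution `σ`, `V` a `K`-vector space, `η` a sesquilinear-type
form on `V`, and `T` an automorphism of `V` preserving `η`. If `f(T)(x) = 0`, `g(T)(y) = 0`,
and `reverse(f^σ)` is coprime to `g`, then `η(x, y) = 0`. -/
theorem stmt_3 (K : Type*) [Field K] (σ : K →+* K) (hσ : ∀ a, σ (σ a) = a)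
    (V : Type*) [AddCommGroup V] [Module K V]
    (η : V → V → K)
    (hadd₁ : ∀ x x' y, η (x + x') y = η x y + η x' y)
    (hadd₂ : ∀ x y y', η x (y + y') = η x y + η x y')
    (hsmul₁ : ∀ (a : K) x y, η (a • x) y = a * η x y)
    (hsmul₂ : ∀ (a : K) x y, η x (a • y) = σ a * η x y)
    (T : V ≃ₗ[K] V) (hT : ∀ x y, η (T x) (T y) = η x y)
    (f g : Polynomial K) (x y : V)
    (hfx : Polynomial.aeval (↑T : Module.End K V) f x = 0)
    (hgy : Polynomial.aeval (↑T : Module.End K V) g y = 0)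
    (hcop : IsCoprime (f.map σ).reverse g) :
    η x y = 0 := by
  set S : Module.End K V := (↑T : Module.End K V) with hS
  set S' : Module.End K V := (↑T.symm : Module.End K V) with hS'
  have hSS' : S * S' = 1 := by
    ext v; simp [hS, hS', Module.End.mul_apply]
  have hS'S : S' * S = 1 := by
    ext v; simp [hS, hS', Module.End.mul_apply]
  -- η(0, w) = 0
  have hzero : ∀ w, η 0 w = 0 := by
    intro w
    have h := hadd₁ 0 0 w
    rw [add_zero] at h
    exact (left_eq_add.mp h)
  -- shift lemma
  have hshift : ∀ a b, η (T a) b = η a (T.symm b) := by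
    intro a b
    conv_lhs => rw [← T.apply_symm_apply b]
    exact hT a (T.symm b)
  -- powers
  have hpow : ∀ (n : ℕ) (a b : V), η ((S ^ n) a) b = η a ((S' ^ n) b) := by
    intro n
    induction n with
    | zero => intro a b; simp
    | succ n ih =>
      intro a b
      rw [pow_succ, pow_succ']
      have h1 : (S ^ n * S) a = (S ^ n) (S a) := Module.End.mul_apply _ _ _
      have h2 : (S' * S' ^ n) b = S' ((S' ^ n) b) := Module.End.mul_apply _ _ _
      rw [h1, h2, ih (S a) b]
      have : S a = T a := rfl
      rw [this, hshift a ((S' ^ n) b)]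
      rfl
  -- main sesquilinearity lemma for polynomials
  have hB : ∀ (p : Polynomial K) (a b : V),
      η ((Polynomial.aeval S p) a) b = η a ((Polynomial.aeval S' (p.map σ)) b) := by
    intro p
    induction p using Polynomial.induction_on' with
    | add p q hp hq =>
      intro a b
      rw [Polynomial.map_add, map_add, map_add, LinearMap.add_apply, LinearMap.add_apply,
        hadd₁, hadd₂, hp, hq]
    | monomial n c =>
      intro a b
      rw [Polynomial.map_monomial, Polynomial.aeval_monomial, Polynomial.aeval_monomial]
      have h1 : (algebraMap K (Module.End K V) c * S ^ n) a = c • ((S ^ n) a) := by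
        rw [Module.End.mul_apply]; simp
      have h2 : (algebraMap K (Module.End K V) (σ c) * S' ^ n) b = σ c • ((S' ^ n) b) := by
        rw [Module.End.mul_apply]; simp
      rw [h1, h2, hsmul₁, hsmul₂, hσ, hpow n a b]
  -- reverse identity
  set q : Polynomial K := f.map σ with hq
  set n : ℕ := q.natDegree with hn
  have hpowinv : ∀ m : ℕ, S' ^ m * S ^ m = 1 := by
    intro m
    induction m with
    | zero => simp
    | succ m ih =>
      rw [pow_succ', pow_succ, mul_assoc, ← mul_assoc (S' ^ m), ih, one_mul, hS'S]
  have hcancel : ∀ i ≤ n, S' ^ i * S ^ n = S ^ (n - i) := by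
    intro i hi
    have : S ^ n = S ^ i * S ^ (n - i) := by
      rw [← pow_add, Nat.add_sub_cancel' hi]
    rw [this, ← mul_assoc, hpowinv, one_mul]
  have hrev : Polynomial.aeval S q.reverse = Polynomial.aeval S' q * S ^ n := by
    have hdeg : q.reverse.natDegree < n + 1 := Nat.lt_succ_of_le q.reverse_natDegree_le
    rw [Polynomial.aeval_eq_sum_range' hdeg S, Polynomial.aeval_eq_sum_range (p := q) S',
      ← hn, Finset.sum_mul, ← Finset.sum_range_reflect]
    apply Finset.sum_congr rfl
    intro i hi
    have hi' : i ≤ n := Nat.lt_succ_iff.mp (Finset.mem_range.mp hi)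
    simp only [Nat.add_sub_cancel]
    rw [Polynomial.coeff_reverse, Polynomial.revAt_le (Nat.sub_le n i),
      Nat.sub_sub_self hi', smul_mul_assoc, hcancel i hi']
  -- coprimality
  obtain ⟨u, v, huv⟩ := hcop
  have hy : y = (Polynomial.aeval S u * (Polynomial.aeval S' q * S ^ n)) y := by
    have h := congrArg (fun p : Polynomial K => (Polynomial.aeval S p) y) huv
    simp only [map_add, map_mul, map_one, Module.End.one_apply, LinearMap.add_apply,
      Module.End.mul_apply] at h
    rw [hgy, map_zero, add_zero] at h
    rw [← hrev, Module.End.mul_apply]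
    exact h.symm
  have hcomm : Commute (Polynomial.aeval S u) (Polynomial.aeval S' q) := by
    apply aux_commute_aeval
    rw [Commute, SemiconjBy, hSS', hS'S]
  have hy' : y = (Polynomial.aeval S' q) ((Polynomial.aeval S u * S ^ n) y) := by
    have hmul : Polynomial.aeval S u * (Polynomial.aeval S' q * S ^ n)
        = Polynomial.aeval S' q * (Polynomial.aeval S u * S ^ n) := by
      rw [← mul_assoc, hcomm.eq, mul_assoc]
    conv_lhs => rw [hy]
    rw [hmul, Module.End.mul_apply]
  set w : V := (Polynomial.aeval S u * S ^ n) y with hw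
  calc η x y = η x ((Polynomial.aeval S' q) w) := by rw [← hy']
    _ = η ((Polynomial.aeval S f) x) w := (hB f x w).symm
    _ = η 0 w := by rw [hfx]
    _ = 0 := hzero w
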